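/- For all real x with 0 < x < π/2, setting ρ = (8π − 24)/(π³ − 2π²), one has x < (3 − ρx²)·sin(x)/(2 + cos(x) − ρx²). -/

import Mathlib

open Real Set

lemma aux_nonneg (f f' : ℝ → ℝ) (hder : ∀ y, HasDerivAt f (f' y) y)
    (h0 : f 0 = 0) (hd : ∀ y, 0 ≤ y → 0 ≤ f' y) {x : ℝ} (hx : 0 ≤ x) : 0 ≤ f x := by
  have hdiff : Differentiable ℝ f := fun y => (hder y).differentiableAt
  have hm : MonotoneOn f (Ici 0) := by
    apply monotoneOn_of_deriv_nonneg (convex_Ici 0) hdiff.continuous.continuousOn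
      hdiff.differentiableOn
    intro y hy
    rw [(hder y).deriv]
    exact hd y (le_of_lt (by simpa [interior_Ici] using hy))
  calc (0:ℝ) = f 0 := h0.symm
  _ ≤ f x := hm (self_mem_Ici) hx hx

lemma S1 {x : ℝ} (hx : 0 ≤ x) : Real.sin x ≤ x := by
  have := aux_nonneg (fun y => y - Real.sin y) (fun y => 1 - Real.cos y)
    (fun y => by exact (hasDerivAt_id' (x := y)).sub (Real.hasDerivAt_sin y))
    (by simp) (fun y _ => by nlinarith [Real.cos_le_one y]) hx
  linarith

lemma C2 {x : ℝ} (hx : 0 ≤ x) : 1 - x^2/2 ≤ Real.cos x := by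
  have := aux_nonneg (fun y => Real.cos y - (1 - y^2/2)) (fun y => y - Real.sin y)
    (fun y => by
      have h := (Real.hasDerivAt_cos y).sub ((hasDerivAt_const y (1:ℝ)).sub ((hasDerivAt_pow 2 y).div_const 2))
      refine h.congr_deriv ?_; push_cast; ring)
    (by norm_num) (fun y hy => by nlinarith [S1 hy]) hx
  linarith

lemma S3 {x : ℝ} (hx : 0 ≤ x) : x - x^3/6 ≤ Real.sin x := by
  have := aux_nonneg (fun y => Real.sin y - (y - y^3/6)) (fun y => Real.cos y - (1 - y^2/2))
    (fun y => by
      have h := (Real.hasDerivAt_sin y).sub ((hasDerivAt_id' (x := y)).sub ((hasDerivAt_pow 3 y).div_const 6))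
      refine h.congr_deriv ?_; push_cast; ring)
    (by norm_num) (fun y hy => by nlinarith [C2 hy]) hx
  linarith

lemma C4 {x : ℝ} (hx : 0 ≤ x) : Real.cos x ≤ 1 - x^2/2 + x^4/24 := by
  have := aux_nonneg (fun y => (1 - y^2/2 + y^4/24) - Real.cos y)
    (fun y => Real.sin y - (y - y^3/6))
    (fun y => by
      have h := (((hasDerivAt_const y (1:ℝ)).sub ((hasDerivAt_pow 2 y).div_const 2)).add
        ((hasDerivAt_pow 4 y).div_const 24)).sub (Real.hasDerivAt_cos y)
      refine h.congr_deriv ?_; push_cast; ring)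
    (by norm_num) (fun y hy => by nlinarith [S3 hy]) hx
  linarith

lemma S5 {x : ℝ} (hx : 0 ≤ x) : Real.sin x ≤ x - x^3/6 + x^5/120 := by
  have := aux_nonneg (fun y => (y - y^3/6 + y^5/120) - Real.sin y)
    (fun y => (1 - y^2/2 + y^4/24) - Real.cos y)
    (fun y => by
      have h := (((hasDerivAt_id' (x := y)).sub ((hasDerivAt_pow 3 y).div_const 6)).add
        ((hasDerivAt_pow 5 y).div_const 120)).sub (Real.hasDerivAt_sin y)
      refine h.congr_deriv ?_; push_cast; ring)
    (by norm_num) (fun y hy => by nlinarith [C4 hy]) hx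
  linarith

lemma C6 {x : ℝ} (hx : 0 ≤ x) : 1 - x^2/2 + x^4/24 - x^6/720 ≤ Real.cos x := by
  have := aux_nonneg (fun y => Real.cos y - (1 - y^2/2 + y^4/24 - y^6/720))
    (fun y => (y - y^3/6 + y^5/120) - Real.sin y)
    (fun y => by
      have h := (Real.hasDerivAt_cos y).sub ((((hasDerivAt_const y (1:ℝ)).sub ((hasDerivAt_pow 2 y).div_const 2)).add
        ((hasDerivAt_pow 4 y).div_const 24)).sub ((hasDerivAt_pow 6 y).div_const 720))
      refine h.congr_deriv ?_; push_cast; ring)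
    (by norm_num) (fun y hy => by nlinarith [S5 hy]) hx
  linarith

lemma S7 {x : ℝ} (hx : 0 ≤ x) : x - x^3/6 + x^5/120 - x^7/5040 ≤ Real.sin x := by
  have := aux_nonneg (fun y => Real.sin y - (y - y^3/6 + y^5/120 - y^7/5040))
    (fun y => Real.cos y - (1 - y^2/2 + y^4/24 - y^6/720))
    (fun y => by
      have h := (Real.hasDerivAt_sin y).sub ((((hasDerivAt_id' (x := y)).sub ((hasDerivAt_pow 3 y).div_const 6)).add
        ((hasDerivAt_pow 5 y).div_const 120)).sub ((hasDerivAt_pow 7 y).div_const 5040))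
      refine h.congr_deriv ?_; push_cast; ring)
    (by norm_num) (fun y hy => by nlinarith [C6 hy]) hx
  linarith

lemma C8 {x : ℝ} (hx : 0 ≤ x) : Real.cos x ≤ 1 - x^2/2 + x^4/24 - x^6/720 + x^8/40320 := by
  have := aux_nonneg (fun y => (1 - y^2/2 + y^4/24 - y^6/720 + y^8/40320) - Real.cos y)
    (fun y => Real.sin y - (y - y^3/6 + y^5/120 - y^7/5040))
    (fun y => by
      have h := (((((hasDerivAt_const y (1:ℝ)).sub ((hasDerivAt_pow 2 y).div_const 2)).add
        ((hasDerivAt_pow 4 y).div_const 24)).sub ((hasDerivAt_pow 6 y).div_const 720)).add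
        ((hasDerivAt_pow 8 y).div_const 40320)).sub (Real.hasDerivAt_cos y)
      refine h.congr_deriv ?_; push_cast; ring)
    (by norm_num) (fun y hy => by nlinarith [S7 hy]) hx
  linarith

lemma S9 {x : ℝ} (hx : 0 ≤ x) : Real.sin x ≤ x - x^3/6 + x^5/120 - x^7/5040 + x^9/362880 := by
  have := aux_nonneg (fun y => (y - y^3/6 + y^5/120 - y^7/5040 + y^9/362880) - Real.sin y)
    (fun y => (1 - y^2/2 + y^4/24 - y^6/720 + y^8/40320) - Real.cos y)
    (fun y => by
      have h := (((((hasDerivAt_id' (x := y)).sub ((hasDerivAt_pow 3 y).div_const 6)).add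
        ((hasDerivAt_pow 5 y).div_const 120)).sub ((hasDerivAt_pow 7 y).div_const 5040)).add
        ((hasDerivAt_pow 9 y).div_const 362880)).sub (Real.hasDerivAt_sin y)
      refine h.congr_deriv ?_; push_cast; ring)
    (by norm_num) (fun y hy => by nlinarith [C8 hy]) hx
  linarith

lemma rho_gt : (0.1005:ℝ) < (8*Real.pi - 24)/(Real.pi^3 - 2*Real.pi^2) := by
  have h1 := Real.pi_gt_d6
  have h2 := Real.pi_lt_d6
  have hd : (0:ℝ) < Real.pi^3 - 2*Real.pi^2 := by nlinarith
  rw [lt_div_iff₀ hd]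
  nlinarith [sq_nonneg (Real.pi - 3.1415926), sq_nonneg (Real.pi - 3.1415927)]

lemma rho_lt : (8*Real.pi - 24)/(Real.pi^3 - 2*Real.pi^2) < 0.1006 := by
  have h1 := Real.pi_gt_d6
  have h2 := Real.pi_lt_d6
  have hd : (0:ℝ) < Real.pi^3 - 2*Real.pi^2 := by nlinarith
  rw [div_lt_iff₀ hd]
  nlinarith [sq_nonneg (Real.pi - 3.1415926), sq_nonneg (Real.pi - 3.1415927)]

lemma region1 (ρ x : ℝ) (hρ : (0.1005:ℝ) ≤ ρ) (hρ' : ρ ≤ 0.1006) (hx0 : 0 < x) (hx : x ≤ 1.2) :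
    0 < ρ*x^3 - ρ*x^2*Real.sin x - 2*x - x*Real.cos x + 3*Real.sin x := by
  have hs7 := S7 hx0.le
  have hs9 := S9 hx0.le
  have hc8 := C8 hx0.le
  have ht : 0 < x^2 := by positivity
  have ht' : x^2 ≤ 1.44 := by nlinarith
  have hQ : 0 < (ρ/6 - 1/60) - (ρ/120 - 1/1260)*x^2 + (ρ/5040 - 1/40320)*x^4 - (ρ/362880)*x^6 := by
    nlinarith [mul_nonneg (sub_nonneg.2 ht') ht.le, mul_nonneg (mul_nonneg (sub_nonneg.2 ht') ht.le) ht.le,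
      mul_nonneg (mul_nonneg (mul_nonneg (sub_nonneg.2 ht') ht.le) ht.le) ht.le, sq_nonneg x]
  have hkey : 0 < ρ*x^3 - ρ*x^2*(x - x^3/6 + x^5/120 - x^7/5040 + x^9/362880) - 2*x
      - x*(1 - x^2/2 + x^4/24 - x^6/720 + x^8/40320) + 3*(x - x^3/6 + x^5/120 - x^7/5040) := by
    have hfac : ρ*x^3 - ρ*x^2*(x - x^3/6 + x^5/120 - x^7/5040 + x^9/362880) - 2*x
      - x*(1 - x^2/2 + x^4/24 - x^6/720 + x^8/40320) + 3*(x - x^3/6 + x^5/120 - x^7/5040)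
      = x^5 * ((ρ/6 - 1/60) - (ρ/120 - 1/1260)*x^2 + (ρ/5040 - 1/40320)*x^4 - (ρ/362880)*x^6) := by
      ring
    rw [hfac]
    exact mul_pos (by positivity) hQ
  have hρ0 : (0:ℝ) ≤ ρ := by linarith
  have e1 : ρ*x^2*Real.sin x ≤ ρ*x^2*(x - x^3/6 + x^5/120 - x^7/5040 + x^9/362880) :=
    mul_le_mul_of_nonneg_left hs9 (by positivity)
  have e2 : x*Real.cos x ≤ x*(1 - x^2/2 + x^4/24 - x^6/720 + x^8/40320) :=
    mul_le_mul_of_nonneg_left hc8 hx0.le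
  have e3 : 3*(x - x^3/6 + x^5/120 - x^7/5040) ≤ 3*Real.sin x := by linarith
  linarith

lemma hasDeriv1 (ρ y : ℝ) :
    HasDerivAt (fun z => ρ*z^3 - ρ*z^2*Real.sin z - 2*z - z*Real.cos z + 3*Real.sin z)
      (3*ρ*y^2 - (2*ρ*y*Real.sin y + ρ*y^2*Real.cos y) - 2 + 2*Real.cos y + y*Real.sin y) y := by
  have h := (((((hasDerivAt_pow 3 y).const_mul ρ).sub
      (((hasDerivAt_pow 2 y).const_mul ρ).mul (Real.hasDerivAt_sin y))).sub
      ((hasDerivAt_id' (x := y)).const_mul 2)).sub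
      ((hasDerivAt_id' (x := y)).mul (Real.hasDerivAt_cos y))).add
      ((Real.hasDerivAt_sin y).const_mul 3)
  refine h.congr_deriv ?_
  push_cast; ring

lemma hasDeriv2 (ρ y : ℝ) :
    HasDerivAt (fun z => 3*ρ*z^2 - (2*ρ*z*Real.sin z + ρ*z^2*Real.cos z) - 2 + 2*Real.cos z + z*Real.sin z)
      (6*ρ*y - 2*ρ*Real.sin y - 4*ρ*y*Real.cos y + ρ*y^2*Real.sin y - Real.sin y + y*Real.cos y) y := by
  have h := (((((hasDerivAt_pow 2 y).const_mul (3*ρ)).sub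
      ((((hasDerivAt_id' (x := y)).const_mul (2*ρ)).mul (Real.hasDerivAt_sin y)).add
       (((hasDerivAt_pow 2 y).const_mul ρ).mul (Real.hasDerivAt_cos y)))).sub
      (hasDerivAt_const y 2)).add
      ((Real.hasDerivAt_cos y).const_mul 2)).add
      ((hasDerivAt_id' (x := y)).mul (Real.hasDerivAt_sin y))
  refine h.congr_deriv ?_
  push_cast; ring

set_option maxHeartbeats 1000000 in
lemma Gneg (ρ y : ℝ) (hρ : (0.1005:ℝ) ≤ ρ) (hρ' : ρ ≤ 0.1006)
    (hy1 : (1.2:ℝ) ≤ y) (hy2 : y ≤ 1.5708) (hyπ : y ≤ Real.pi/2) :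
    6*ρ*y - 2*ρ*Real.sin y - 4*ρ*y*Real.cos y + ρ*y^2*Real.sin y - Real.sin y + y*Real.cos y < 0 := by
  have hy0 : (0:ℝ) ≤ y := by linarith
  have hsy : 0 ≤ Real.sin y := Real.sin_nonneg_of_nonneg_of_le_pi hy0 (by
    nlinarith [Real.pi_gt_d6])
  have hcy : 0 ≤ Real.cos y := Real.cos_nonneg_of_mem_Icc ⟨by linarith [Real.pi_gt_d6], hyπ⟩
  have hu : 0 ≤ 6*y - 2*Real.sin y - 4*y*Real.cos y + y^2*Real.sin y := by
    nlinarith [Real.sin_le_one y, Real.cos_le_one y, mul_nonneg (sq_nonneg y) hsy]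
  have step1 : 6*ρ*y - 2*ρ*Real.sin y - 4*ρ*y*Real.cos y + ρ*y^2*Real.sin y - Real.sin y + y*Real.cos y
      ≤ 0.1006*(6*y - 2*Real.sin y - 4*y*Real.cos y + y^2*Real.sin y) + (y*Real.cos y - Real.sin y) := by
    nlinarith [mul_le_mul_of_nonneg_right hρ' hu]
  have hcoef : 0.1006*y^2 - 1.2012 ≤ 0 := by nlinarith
  have hs7 := S7 hy0
  have hc8 := C8 hy0
  have e1 : (0.1006*y^2 - 1.2012)*Real.sin y ≤ (0.1006*y^2 - 1.2012)*(y - y^3/6 + y^5/120 - y^7/5040) :=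
    mul_le_mul_of_nonpos_left hs7 hcoef
  have e2 : 0.5976*y*Real.cos y ≤ 0.5976*y*(1 - y^2/2 + y^4/24 - y^6/720 + y^8/40320) :=
    mul_le_mul_of_nonneg_left hc8 (by linarith)
  have step2 : 0.1006*(6*y - 2*Real.sin y - 4*y*Real.cos y + y^2*Real.sin y) + (y*Real.cos y - Real.sin y)
      = 0.6036*y + (0.1006*y^2 - 1.2012)*Real.sin y + 0.5976*y*Real.cos y := by ring
  have hG : 0.6036*y + (0.1006*y^2 - 1.2012)*(y - y^3/6 + y^5/120 - y^7/5040)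
      + 0.5976*y*(1 - y^2/2 + y^4/24 - y^6/720 + y^8/40320) < 0 := by
    have hu0 : (0:ℝ) ≤ y - 1.2 := by linarith
    have h37 : (0:ℝ) ≤ 0.3708 - (y - 1.2) := by linarith
    nlinarith [mul_nonneg h37 (pow_nonneg hu0 3), mul_nonneg h37 (pow_nonneg hu0 4),
      mul_nonneg h37 (pow_nonneg hu0 5), pow_nonneg hu0 2, pow_nonneg hu0 3,
      pow_nonneg hu0 6, pow_nonneg hu0 7, pow_nonneg hu0 8, pow_nonneg hu0 9, hu0]
  linarith

theorem trig_frame_upper (x : ℝ) (hx0 : 0 < x) (hx : x < Real.pi / 2) :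
    x < (3 - ((8*Real.pi - 24)/(Real.pi^3 - 2*Real.pi^2)) * x^2) * Real.sin x /
        (2 + Real.cos x - ((8*Real.pi - 24)/(Real.pi^3 - 2*Real.pi^2)) * x^2) := by
  have hπ1 := Real.pi_gt_d6
  have hπ2 := Real.pi_lt_d6
  set ρ : ℝ := (8*Real.pi - 24)/(Real.pi^3 - 2*Real.pi^2) with hρdef
  have hρl : (0.1005:ℝ) < ρ := rho_gt
  have hρu : ρ < 0.1006 := rho_lt
  have hx157 : x < 1.5708 := by linarith
  -- positivity of h(x)
  have hpos : 0 < ρ*x^3 - ρ*x^2*Real.sin x - 2*x - x*Real.cos x + 3*Real.sin x := by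
    rcases le_or_gt x 1.2 with hc | hc
    · exact region1 ρ x hρl.le hρu.le hx0 hc
    · -- concavity on [1.2, π/2]
      set f : ℝ → ℝ := fun z => ρ*z^3 - ρ*z^2*Real.sin z - 2*z - z*Real.cos z + 3*Real.sin z with hfdef
      have hAB : (1.2:ℝ) < Real.pi/2 := by linarith
      have hd1 : deriv f = fun y => 3*ρ*y^2 - (2*ρ*y*Real.sin y + ρ*y^2*Real.cos y) - 2 + 2*Real.cos y + y*Real.sin y :=
        funext fun y => (hasDeriv1 ρ y).deriv
      have hconc : StrictConcaveOn ℝ (Icc 1.2 (Real.pi/2)) f := by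
        apply strictConcaveOn_of_deriv2_neg (convex_Icc _ _)
        · apply Continuous.continuousOn; fun_prop
        · intro y hy
          rw [interior_Icc] at hy
          have h2 : deriv^[2] f y = 6*ρ*y - 2*ρ*Real.sin y - 4*ρ*y*Real.cos y + ρ*y^2*Real.sin y - Real.sin y + y*Real.cos y := by
            show deriv (deriv f) y = _
            rw [hd1]
            exact (hasDeriv2 ρ y).deriv
          rw [h2]
          exact Gneg ρ y hρl.le hρu.le hy.1.le (by linarith [hy.2]) hy.2.le
      have hfA : 0 < f 1.2 := region1 ρ 1.2 hρl.le hρu.le (by norm_num) le_rfl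
      have hfB : f (Real.pi/2) = 0 := by
        have hne : Real.pi^3 - 2*Real.pi^2 ≠ 0 := by nlinarith
        show ρ*(Real.pi/2)^3 - ρ*(Real.pi/2)^2*Real.sin (Real.pi/2) - 2*(Real.pi/2)
          - (Real.pi/2)*Real.cos (Real.pi/2) + 3*Real.sin (Real.pi/2) = 0
        rw [Real.sin_pi_div_two, Real.cos_pi_div_two, hρdef]
        have hne2 : Real.pi - 2 ≠ 0 := (by linarith : (0:ℝ) < Real.pi - 2).ne'
        field_simp [hne2]
        ring
      -- chord argument
      have hL : (0:ℝ) < Real.pi/2 - 1.2 := by linarith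
      set p : ℝ := (Real.pi/2 - x)/(Real.pi/2 - 1.2) with hpdef
      set q : ℝ := (x - 1.2)/(Real.pi/2 - 1.2) with hqdef
      have hp : 0 < p := div_pos (by linarith) hL
      have hq : 0 < q := div_pos (by linarith) hL
      have hpq : p + q = 1 := by
        rw [hpdef, hqdef, ← add_div, div_eq_one_iff_eq hL.ne']
        ring
      have hcomb : p • (1.2:ℝ) + q • (Real.pi/2) = x := by
        simp only [smul_eq_mul, hpdef, hqdef]
        rw [div_mul_eq_mul_div, div_mul_eq_mul_div, ← add_div, div_eq_iff hL.ne']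
        ring
      have hm1 : (1.2:ℝ) ∈ Icc (1.2:ℝ) (Real.pi/2) := ⟨le_rfl, hAB.le⟩
      have hm2 : Real.pi/2 ∈ Icc (1.2:ℝ) (Real.pi/2) := ⟨hAB.le, le_rfl⟩
      have := hconc.2 hm1 hm2 (ne_of_lt hAB) hp hq hpq
      rw [hcomb] at this
      have hfx : 0 < f x := by
        have h1 : p • f 1.2 + q • f (Real.pi/2) < f x := this
        rw [hfB] at h1
        simp only [smul_eq_mul] at h1
        have h2 : 0 < p * f 1.2 := mul_pos hp hfA
        clear_value f p q
        linarith
      simpa [hfdef] using hfx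
  -- finish
  have hsin : 0 < Real.sin x := Real.sin_pos_of_pos_of_lt_pi hx0 (by linarith)
  have hcos : 0 < Real.cos x := Real.cos_pos_of_mem_Ioo ⟨by linarith, hx⟩
  have hD : 0 < 2 + Real.cos x - ρ*x^2 := by nlinarith
  rw [lt_div_iff₀ hD]
  nlinarith [hpos]
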